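/- For all integers r ≥ 0 and t ≥ 0, E(r,t) is the sum of the t largest elements of the multiset {(1-p)·β_p(j,r) : j ∈ ℕ}; equivalently, E(r,t) equals the maximum of ∑_{j∈S} (1-p)·β_p(j,r) over all finite subsets S ⊆ ℕ with |S| = t, and this maximum is attained at S = {0,1,…,t-1}. -/
import Mathlib


/-- `betaP p t r = ∑_{i=0}^{r-1} C(t,i) (1-p)^i p^(t-i)`. -/
noncomputable def betaP (p : ℝ) (t r : ℕ) : ℝ :=
  ∑ i ∈ Finset.range r, (t.choose i : ℝ) * (1 - p) ^ i * p ^ (t - i)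

/-- Expected rank function `E(r,t) = ∑_{i=0}^{t} C(t,i) (1-p)^i p^(t-i) * min{i,r}`. -/
noncomputable def expRank (p : ℝ) (r t : ℕ) : ℝ :=
  ∑ i ∈ Finset.range (t + 1),
    (t.choose i : ℝ) * (1 - p) ^ i * p ^ (t - i) * ((min i r : ℕ) : ℝ)

lemma betaP_nonneg {p : ℝ} (hp0 : 0 ≤ p) (hp1 : p ≤ 1) (t r : ℕ) :
    0 ≤ betaP p t r := by
  apply Finset.sum_nonneg
  intro i _
  have h1 : (0:ℝ) ≤ 1 - p := by linarith
  positivity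

/-- Pascal-type recurrence for `betaP` in its first argument. -/
lemma betaP_succ_left (p : ℝ) (t s : ℕ) :
    betaP p (t + 1) (s + 1) = p * betaP p t (s + 1) + (1 - p) * betaP p t s := by
  unfold betaP
  have key : ∀ i ∈ Finset.range (s + 1),
      (((t+1).choose i : ℝ) * (1 - p) ^ i * p ^ (t + 1 - i))
      = p * ((t.choose i : ℝ) * (1 - p) ^ i * p ^ (t - i))
        + (fun i => if i = 0 then (0:ℝ) else
            (1 - p) * ((t.choose (i-1) : ℝ) * (1 - p) ^ (i-1) * p ^ (t - (i-1)))) i := by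
    intro i _
    rcases Nat.eq_zero_or_pos i with h0 | h0
    · subst h0
      simp [Nat.sub_zero, pow_succ]
      ring
    · obtain ⟨j, rfl⟩ := Nat.exists_eq_succ_of_ne_zero h0.ne'
      simp only [Nat.succ_ne_zero, if_false, Nat.succ_sub_one]
      rcases le_or_gt (j + 1) t with hle | hlt
      · have h1 : (t+1).choose (j+1) = t.choose j + t.choose (j+1) :=
          Nat.choose_succ_succ t j
        have h2 : t + 1 - (j + 1) = t - (j+1) + 1 := by omega
        have h3 : t - j = t - (j+1) + 1 := by omega
        rw [h1, h2, h3]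
        push_cast
        rw [pow_succ, pow_succ]
        ring
      · rcases Nat.lt_or_ge t j with h2 | h2
        · have h1 : t.choose (j+1) = 0 := Nat.choose_eq_zero_of_lt (by omega)
          have h3 : t.choose j = 0 := Nat.choose_eq_zero_of_lt h2
          have h4 : (t+1).choose (j+1) = 0 := Nat.choose_eq_zero_of_lt (by omega)
          simp [h1, h3, h4]
        · have hj : t = j := le_antisymm (by omega) h2
          subst hj
          have h1 : t.choose (t+1) = 0 := Nat.choose_eq_zero_of_lt (by omega)
          have h4 : (t+1).choose (t+1) = 1 := Nat.choose_self _
          have h5 : t + 1 - (t + 1) = 0 := by omega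
          have h6 : t - t = 0 := by omega
          rw [h1, h4, h5, h6, Nat.choose_self, pow_succ]
          push_cast
          ring
  rw [Finset.sum_congr rfl key, Finset.sum_add_distrib]
  congr 1
  · rw [Finset.mul_sum]
  · rw [Finset.sum_range_succ']
    simp [Finset.mul_sum]

lemma betaP_mono_right {p : ℝ} (hp0 : 0 ≤ p) (hp1 : p ≤ 1) (t : ℕ) {r s : ℕ}
    (h : r ≤ s) : betaP p t r ≤ betaP p t s := by
  unfold betaP
  apply Finset.sum_le_sum_of_subset_of_nonneg (Finset.range_subset_range.mpr h)
  intro i _ _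
  have h1 : (0:ℝ) ≤ 1 - p := by linarith
  positivity

/-- `betaP` is nonincreasing in the first argument. -/
lemma betaP_anti {p : ℝ} (hp0 : 0 ≤ p) (hp1 : p ≤ 1) (r : ℕ) :
    Antitone (fun t => betaP p t r) := by
  apply antitone_nat_of_succ_le
  intro t
  rcases r with _ | s
  · simp [betaP]
  · rw [betaP_succ_left]
    have h1 : betaP p t s ≤ betaP p t (s+1) :=
      betaP_mono_right hp0 hp1 t (Nat.le_succ s)
    nlinarith [betaP_nonneg hp0 hp1 t (s+1)]

/-- Recurrence for `expRank` in `t`. -/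
lemma expRank_succ (p : ℝ) (r t : ℕ) :
    expRank p r (t + 1) = expRank p r t + (1 - p) * betaP p t r := by
  unfold expRank
  have key : ∀ i ∈ Finset.range (t + 2),
      (((t+1).choose i : ℝ) * (1 - p) ^ i * p ^ (t + 1 - i) * ((min i r : ℕ) : ℝ))
      = p * ((t.choose i : ℝ) * (1 - p) ^ i * p ^ (t - i) * ((min i r : ℕ) : ℝ))
        + (fun i => if i = 0 then (0:ℝ) else
            (1 - p) * ((t.choose (i-1) : ℝ) * (1 - p) ^ (i-1) * p ^ (t - (i-1))
              * ((min i r : ℕ) : ℝ))) i := by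
    intro i hi
    rw [Finset.mem_range] at hi
    rcases Nat.eq_zero_or_pos i with h0 | h0
    · subst h0
      simp [Nat.sub_zero, pow_succ]
    · obtain ⟨j, rfl⟩ := Nat.exists_eq_succ_of_ne_zero h0.ne'
      simp only [Nat.succ_ne_zero, if_false, Nat.succ_sub_one]
      rcases le_or_gt (j + 1) t with hle | hlt
      · have h1 : (t+1).choose (j+1) = t.choose j + t.choose (j+1) :=
          Nat.choose_succ_succ t j
        have h2 : t + 1 - (j + 1) = t - (j+1) + 1 := by omega
        have h3 : t - j = t - (j+1) + 1 := by omega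
        rw [h1, h2, h3]
        push_cast
        rw [pow_succ, pow_succ]
        ring
      · have hj : t = j := by omega
        subst hj
        have h1 : t.choose (t+1) = 0 := Nat.choose_eq_zero_of_lt (by omega)
        have h4 : (t+1).choose (t+1) = 1 := Nat.choose_self _
        have h5 : t + 1 - (t + 1) = 0 := by omega
        have h6 : t - t = 0 := by omega
        rw [h1, h4, h5, h6, Nat.choose_self, pow_succ]
        push_cast
        ring
  have e1' : ∑ i ∈ Finset.range (t + 2),
      (fun i => if i = 0 then (0:ℝ) else
        (1 - p) * ((t.choose (i-1) : ℝ) * (1 - p) ^ (i-1) * p ^ (t - (i-1))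
          * ((min i r : ℕ) : ℝ))) i
      = ∑ i ∈ Finset.range (t + 1),
          (1 - p) * ((t.choose i : ℝ) * (1 - p) ^ i * p ^ (t - i) * ((min (i+1) r : ℕ) : ℝ)) := by
    rw [Finset.sum_range_succ']
    simp
  have e1 : ∑ i ∈ Finset.range (t + 2),
      p * ((t.choose i : ℝ) * (1 - p) ^ i * p ^ (t - i) * ((min i r : ℕ) : ℝ))
      = p * ∑ i ∈ Finset.range (t + 1),
          (t.choose i : ℝ) * (1 - p) ^ i * p ^ (t - i) * ((min i r : ℕ) : ℝ) := by
    rw [Finset.sum_range_succ]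
    rw [Nat.choose_eq_zero_of_lt (by omega : t < t + 1)]
    simp [Finset.mul_sum]
  have e2 : ∀ i ∈ Finset.range (t + 1),
      (1 - p) * ((t.choose i : ℝ) * (1 - p) ^ i * p ^ (t - i) * ((min (i+1) r : ℕ) : ℝ))
      = (1 - p) * ((t.choose i : ℝ) * (1 - p) ^ i * p ^ (t - i) * ((min i r : ℕ) : ℝ))
        + (if i < r then (1 - p) * ((t.choose i : ℝ) * (1 - p) ^ i * p ^ (t - i)) else 0) := by
    intro i _
    by_cases h : i < r
    · have : min (i+1) r = min i r + 1 := by omega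
      rw [this, if_pos h]
      push_cast
      ring
    · have : min (i+1) r = min i r := by omega
      rw [this, if_neg h, add_zero]
  have e3 : ∑ i ∈ Finset.range (t + 1),
      (if i < r then (1 - p) * ((t.choose i : ℝ) * (1 - p) ^ i * p ^ (t - i)) else 0)
      = (1 - p) * betaP p t r := by
    have h1 : ∑ i ∈ Finset.range (t + 1),
        (if i < r then (1 - p) * ((t.choose i : ℝ) * (1 - p) ^ i * p ^ (t - i)) else 0)
        = ∑ i ∈ Finset.range (max (t + 1) r),
            (if i < r then (1 - p) * ((t.choose i : ℝ) * (1 - p) ^ i * p ^ (t - i)) else 0) := by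
      apply Finset.sum_subset (Finset.range_subset_range.mpr (le_max_left _ _))
      intro i _ hi
      rw [Finset.mem_range, not_lt] at hi
      split
      · rw [Nat.choose_eq_zero_of_lt (by omega)]
        simp
      · rfl
    rw [h1, ← Finset.sum_filter]
    have h2 : (Finset.range (max (t + 1) r)).filter (· < r) = Finset.range r := by
      ext i
      simp only [Finset.mem_filter, Finset.mem_range]
      omega
    rw [h2, betaP, Finset.mul_sum]
  rw [Finset.sum_congr rfl key]
  rw [Finset.sum_add_distrib]
  rw [e1]
  rw [e1']
  rw [Finset.sum_congr rfl e2]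
  rw [Finset.sum_add_distrib]
  rw [e3]
  rw [← Finset.mul_sum]
  ring

lemma expRank_eq (p : ℝ) (r t : ℕ) :
    expRank p r t = ∑ j ∈ Finset.range t, (1 - p) * betaP p j r := by
  induction t with
  | zero => simp [expRank]
  | succ t ih => rw [expRank_succ, ih, Finset.sum_range_succ]

lemma le_of_strictMono_fin {t : ℕ} (e : Fin t → ℕ) (he : StrictMono e) (k : Fin t) :
    (k : ℕ) ≤ e k := by
  obtain ⟨n, hn⟩ := k
  induction n with
  | zero => exact Nat.zero_le _
  | succ n ih =>
    have h1 : e ⟨n, by omega⟩ < e ⟨n + 1, hn⟩ := he (by simp [Fin.lt_def])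
    have h2 := ih (by omega)
    simp only at h2 ⊢
    omega

theorem stmt9 (p : ℝ) (hp0 : 0 < p) (hp1 : p < 1) (r t : ℕ) :
    IsGreatest {x : ℝ | ∃ S : Finset ℕ, S.card = t ∧
      x = ∑ j ∈ S, (1 - p) * betaP p j r} (expRank p r t) ∧
    expRank p r t = ∑ j ∈ Finset.range t, (1 - p) * betaP p j r := by
  have hp0' : 0 ≤ p := hp0.le
  have hp1' : p ≤ 1 := hp1.le
  have hanti : Antitone (fun j => (1 - p) * betaP p j r) := by
    intro a b hab
    exact mul_le_mul_of_nonneg_left (betaP_anti hp0' hp1' r hab) (by linarith)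
  refine ⟨⟨⟨Finset.range t, Finset.card_range t, (expRank_eq p r t)⟩, ?_⟩, expRank_eq p r t⟩
  rintro x ⟨S, hS, rfl⟩
  set e := S.orderEmbOfFin hS with he
  have hmap : Finset.univ.map e.toEmbedding = S := by
    ext j
    rw [Finset.mem_map]
    constructor
    · rintro ⟨k, -, rfl⟩
      exact Finset.orderEmbOfFin_mem S hS k
    · intro hj
      have : j ∈ Set.range (S.orderEmbOfFin hS) :=
        (Finset.range_orderEmbOfFin S hS).symm ▸ (Finset.mem_coe.mpr hj)
      obtain ⟨k, hk⟩ := this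
      exact ⟨k, Finset.mem_univ k, hk⟩
    
  calc ∑ j ∈ S, (1 - p) * betaP p j r
      = ∑ k : Fin t, (1 - p) * betaP p (e k) r := by
        rw [← hmap, Finset.sum_map]
        rfl
    _ ≤ ∑ k : Fin t, (1 - p) * betaP p (k : ℕ) r := by
        apply Finset.sum_le_sum
        intro k _
        exact hanti (le_of_strictMono_fin e e.strictMono k)
    _ = ∑ j ∈ Finset.range t, (1 - p) * betaP p j r :=
        Fin.sum_univ_eq_sum_range (fun j => (1 - p) * betaP p j r) t
    _ = expRank p r t := (expRank_eq p r t).symm
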